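/- arXiv:2109.15268 — 3 statements merged into one kernel-verified Lean document; each statement's English description precedes it below -/
import Mathlib

section
/- Let P be a shortest uv-trail of a uv-straight graph G with twist pair (s,t), and let a be the vertex of P[u,s] with h(a) = h(t). Let d be any vertex such that the quadruple (a,t,s,d) is winged in G, and let (W1,W2) be any pair of wings for (a,t,s,d) in G. Then every monotone us-path S of G containing W1 as a subpath is a sidetrack for P. -/
open SimpleGraph

variable {V : Type*}

/-- A walk is monotone if its vertices have pairwise distinct heights. -/
def MonoWalk (G : SimpleGraph V) (u : V) {x y : V} (W : G.Walk x y) : Prop :=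
  (W.support.map (fun z => G.dist u z)).Nodup

/-- `P` is a shortest `x`-`y` path of `G`. -/
def IsShortestPath (G : SimpleGraph V) {x y : V} (P : G.Walk x y) : Prop :=
  P.IsPath ∧ P.length = G.dist x y

/-- `P` is an induced path of `G`: a path that equals the subgraph of `G`
induced by its vertex set. -/
def IsInducedPath (G : SimpleGraph V) {x y : V} (P : G.Walk x y) : Prop :=
  P.IsPath ∧ ∀ a b : V, a ∈ P.support → b ∈ P.support → G.Adj a b → P.toSubgraph.Adj a b

/-- A `uv`-trail of `G`: an induced `uv`-path of `G` that is not a shortest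
`uv`-path of `G`. -/
def IsTrailPath (G : SimpleGraph V) (u v : V) (P : G.Walk u v) : Prop :=
  IsInducedPath G P ∧ ¬ IsShortestPath G P

/-- A shortest `uv`-trail of `G`: a `uv`-trail of minimum number of edges. -/
def IsShortestTrail (G : SimpleGraph V) (u v : V) (P : G.Walk u v) : Prop :=
  IsTrailPath G u v P ∧ ∀ Q : G.Walk u v, IsTrailPath G u v Q → P.length ≤ Q.length

/-- `G` is `uv`-straight: every vertex lies on a shortest `uv`-path of `G`. -/
def Straight (G : SimpleGraph V) (u v : V) : Prop :=
  ∀ x : V, ∃ P : G.Walk u v, IsShortestPath G P ∧ x ∈ P.support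

/-- Vertex sets `X` and `Y` are anticomplete in `G`: they are disjoint and there
is no edge of `G` between them. -/
def Anticomplete (G : SimpleGraph V) (X Y : Set V) : Prop :=
  ∀ x ∈ X, ∀ y ∈ Y, x ≠ y ∧ ¬ G.Adj x y

/-- `x` and `y` are connected in the subgraph of `G` induced by `A`. -/
def ConnIn (G : SimpleGraph V) (A : Set V) (x y : V) : Prop :=
  ∃ W : G.Walk x y, ∀ z ∈ W.support, z ∈ A

/-- The closed neighborhood `N_G[A]` of a vertex set `A`. -/
def closedNbhd (G : SimpleGraph V) (A : Set V) : Set V :=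
  {y | y ∈ A ∨ ∃ x ∈ A, G.Adj x y}

/-- `(s, t)` is the twist pair of the `uv`-path `P`: `P[u,s]` is the maximal
monotone prefix of `P` and `P[t,v]` is the maximal monotone suffix of `P`. -/
def IsTwistPair [DecidableEq V] (G : SimpleGraph V) (u v : V) (P : G.Walk u v)
    (s t : V) : Prop :=
  ∃ (hs : s ∈ P.support) (ht : t ∈ P.support),
    MonoWalk G u (P.takeUntil s hs) ∧ MonoWalk G u (P.dropUntil t ht) ∧
    (∀ (s' : V) (hs' : s' ∈ P.support), MonoWalk G u (P.takeUntil s' hs') →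
      (P.takeUntil s' hs').length ≤ (P.takeUntil s hs).length) ∧
    (∀ (t' : V) (ht' : t' ∈ P.support), MonoWalk G u (P.dropUntil t' ht') →
      (P.dropUntil t' ht').length ≤ (P.dropUntil t ht).length)

/-- `(W1, W2)` is a pair of wings for the quadruple `(a, b, c, d)` in `G`
(with respect to heights measured from `u`): `W1` is a monotone `c`-`a*`-path
containing `a`, `W2` is a monotone `b`-`d*`-path containing `d`,
`h(a*) + 1 = h(a) = h(b) ≤ h(c) = h(d) = h(d*) - 1`, `W1 - c` is anticomplete
to `W2`, and `W1` is anticomplete to `W2 - b`. -/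
def IsWingPair (G : SimpleGraph V) (u : V) (a b c d : V) {astar dstar : V}
    (W1 : G.Walk c astar) (W2 : G.Walk b dstar) : Prop :=
  W1.IsPath ∧ W2.IsPath ∧ MonoWalk G u W1 ∧ MonoWalk G u W2 ∧
  a ∈ W1.support ∧ d ∈ W2.support ∧
  G.dist u astar + 1 = G.dist u a ∧ G.dist u a = G.dist u b ∧
  G.dist u b ≤ G.dist u c ∧ G.dist u c = G.dist u d ∧
  G.dist u d + 1 = G.dist u dstar ∧
  Anticomplete G {x | x ∈ W1.support ∧ x ≠ c} {x | x ∈ W2.support} ∧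
  Anticomplete G {x | x ∈ W1.support} {x | x ∈ W2.support ∧ x ≠ b}

/-- The quadruple `(a, b, c, d)` is winged in `G`. -/
def Winged (G : SimpleGraph V) (u : V) (a b c d : V) : Prop :=
  ∃ (astar dstar : V) (W1 : G.Walk c astar) (W2 : G.Walk b dstar),
    IsWingPair G u a b c d W1 W2

/-- The quadruple `(a, b, c, d)` admits a pair of wings `(W1, W2)` in `G` with
`W1` anticomplete to `W2`. -/
def WingedAnti (G : SimpleGraph V) (u : V) (a b c d : V) : Prop :=
  ∃ (astar dstar : V) (W1 : G.Walk c astar) (W2 : G.Walk b dstar),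
    IsWingPair G u a b c d W1 W2 ∧
    Anticomplete G {x | x ∈ W1.support} {x | x ∈ W2.support}

/-- For a `uv`-trail `P` of a `uv`-straight graph `G` with twist pair `(s, t)`,
a monotone `uc`-path `S` of `G` with `h(c) = h(s)` is a sidetrack for `P` if
(S1) `G` contains a monotone `tv`-path `T` with `S - c` anticomplete to `T` and
`S` anticomplete to `T - t`, and (S2) `S` contains the vertex `a` of `P[u,s]`
with `h(a) = h(t)`. -/
def IsSidetrack [DecidableEq V] (G : SimpleGraph V) (u v : V) (P : G.Walk u v)
    (s t : V) {c : V} (S : G.Walk u c) : Prop :=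
  S.IsPath ∧ MonoWalk G u S ∧ G.dist u c = G.dist u s ∧
  (∃ (T : G.Walk t v), T.IsPath ∧ MonoWalk G u T ∧
    Anticomplete G {x | x ∈ S.support ∧ x ≠ c} {x | x ∈ T.support} ∧
    Anticomplete G {x | x ∈ S.support} {x | x ∈ T.support ∧ x ≠ t}) ∧
  (∀ (hs : s ∈ P.support) (a : V),
    a ∈ (P.takeUntil s hs).support → G.dist u a = G.dist u t → a ∈ S.support)


lemma walk_ivt {G : SimpleGraph V} {u : V}
    (hstep : ∀ {x y : V}, G.Adj x y → G.dist u y ≤ G.dist u x + 1) :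
    ∀ {p q : V} (W : G.Walk p q) (k : ℕ), min (G.dist u p) (G.dist u q) ≤ k →
      k ≤ max (G.dist u p) (G.dist u q) → ∃ z ∈ W.support, G.dist u z = k
  | p, _, Walk.nil, k, h1, h2 => ⟨p, by simp, by omega⟩
  | p, q, Walk.cons hadj W, k, h1, h2 => by
    by_cases hk : G.dist u p = k
    · exact ⟨p, by simp, hk⟩
    · have b1 := hstep hadj
      have b2 := hstep hadj.symm
      obtain ⟨z, hz, hzk⟩ := walk_ivt hstep W k (by omega) (by omega)
      exact ⟨z, by simp [hz], hzk⟩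

lemma mono_inj {G : SimpleGraph V} {u : V} {p q : V} {W : G.Walk p q}
    (hm : MonoWalk G u W) {y z : V}
    (hy : y ∈ W.support) (hz : z ∈ W.support) (h : G.dist u y = G.dist u z) : y = z :=
  List.inj_on_of_nodup_map hm hy hz h

lemma mono_bound [DecidableEq V] {G : SimpleGraph V} {u : V} {p q : V} {W : G.Walk p q}
    (hm : MonoWalk G u W)
    (hstep : ∀ {x y : V}, G.Adj x y → G.dist u y ≤ G.dist u x + 1)
    {z : V} (hz : z ∈ W.support) :
    min (G.dist u p) (G.dist u q) ≤ G.dist u z ∧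
      G.dist u z ≤ max (G.dist u p) (G.dist u q) := by
  have hnd : W.support.Nodup := List.Nodup.of_map _ hm
  have key : ∀ k : ℕ, min (G.dist u p) (G.dist u q) ≤ k →
      k ≤ max (G.dist u p) (G.dist u q) → G.dist u z ≠ k → False → False := fun _ _ _ _ h => h
  have main : ∀ k : ℕ, min (G.dist u p) (G.dist u q) ≤ k →
      k ≤ max (G.dist u p) (G.dist u q) →
      min (G.dist u p) (G.dist u z) ≤ k → k ≤ max (G.dist u p) (G.dist u z) →
      min (G.dist u z) (G.dist u q) ≤ k → k ≤ max (G.dist u z) (G.dist u q) →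
      k ≠ G.dist u z → False := by
    intro k hk1 hk2 hk3 hk4 hk5 hk6 hkz
    obtain ⟨z1, hz1, hz1k⟩ := walk_ivt hstep (W.takeUntil z hz) k hk3 hk4
    obtain ⟨z2, hz2, hz2k⟩ := walk_ivt hstep (W.dropUntil z hz) k hk5 hk6
    have hz1W : z1 ∈ W.support := W.support_takeUntil_subset hz hz1
    have hz2W : z2 ∈ W.support := W.support_dropUntil_subset hz hz2
    have he : z1 = z2 := mono_inj hm hz1W hz2W (hz1k.trans hz2k.symm)
    have hz2ne : z2 ≠ z := fun h => hkz (h ▸ hz2k).symm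
    have hz2tail : z2 ∈ (W.dropUntil z hz).support.tail := by
      have := (W.dropUntil z hz).support_eq_cons
      rw [this] at hz2
      rcases List.mem_cons.mp hz2 with h | h
      · exact absurd h hz2ne
      · exact h
    have hsplit : W.support = (W.takeUntil z hz).support ++ (W.dropUntil z hz).support.tail := by
      conv_lhs => rw [← W.take_spec hz]
      exact Walk.support_append _ _
    rw [hsplit] at hnd
    exact (List.nodup_append'.mp hnd).2.2 hz1 (he ▸ hz2tail)
  constructor
  · by_contra hlt
    push_neg at hlt
    exact main (min (G.dist u p) (G.dist u q)) (le_refl _) (by omega) (by omega) (by omega)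
      (by omega) (by omega) (by omega)
  · by_contra hlt
    push_neg at hlt
    exact main (max (G.dist u p) (G.dist u q)) (by omega) (le_refl _) (by omega) (by omega)
      (by omega) (by omega) (by omega)

lemma range_of_shortest {G : SimpleGraph V} {u v : V} (hconn : G.Connected) :
    ∀ {x : V} (R : G.Walk x v), R.length = G.dist x v →
      G.dist u v = G.dist u x + G.dist x v →
      R.support.map (fun z => G.dist u z) = List.range' (G.dist u x) (R.length + 1)
  | x, Walk.nil, h1, h2 => by simp
  | x, Walk.cons (v := y) hadj W, h1, h2 => by
    have d1 : G.dist x y ≤ 1 := by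
      have := SimpleGraph.dist_le (Walk.cons hadj Walk.nil)
      simpa using this
    have d2 : G.dist y v ≤ W.length := SimpleGraph.dist_le W
    have d3 : G.dist x v ≤ G.dist x y + G.dist y v := hconn.dist_triangle
    have hlen : (Walk.cons hadj W).length = W.length + 1 := by simp
    have hW : W.length = G.dist y v := by omega
    have d4 : G.dist u y ≤ G.dist u x + G.dist x y := hconn.dist_triangle
    have d5 : G.dist u v ≤ G.dist u y + G.dist y v := hconn.dist_triangle
    have hy : G.dist u y = G.dist u x + 1 := by omega
    have h2' : G.dist u v = G.dist u y + G.dist y v := by omega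
    have ih := range_of_shortest hconn W hW h2'
    rw [Walk.support_cons, List.map_cons, ih, hlen, hy, List.range'_succ]
    simp [List.range'_succ]

/-- Let `P` be a shortest `uv`-trail of a `uv`-straight graph
`G` with twist pair `(s, t)`, let `a` be the vertex of `P[u,s]` with
`h(a) = h(t)`, let `d` be any vertex such that `(a, t, s, d)` is winged in `G`,
and let `(W1, W2)` be any pair of wings for `(a, t, s, d)` in `G`. Then every
monotone `us`-path `S` of `G` containing `W1` as a subpath is a sidetrack for
`P`. -/
theorem statement9 [Fintype V] [DecidableEq V] (G : SimpleGraph V) (u v : V)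
    (hstraight : Straight G u v)
    (P : G.Walk u v) (hP : IsShortestTrail G u v P)
    (s t : V) (htwist : IsTwistPair G u v P s t)
    (hs : s ∈ P.support)
    (a : V) (ha : a ∈ (P.takeUntil s hs).support)
    (hha : G.dist u a = G.dist u t)
    (d astar dstar : V) (W1 : G.Walk s astar) (W2 : G.Walk t dstar)
    (hwings : IsWingPair G u a t s d W1 W2)
    (S : G.Walk u s) (hSpath : S.IsPath) (hSmono : MonoWalk G u S)
    (hSsub : ∃ S0 : G.Walk u astar, S = S0.append W1.reverse) :
    IsSidetrack G u v P s t S := by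

  classical
  obtain ⟨hW1path, hW2path, monoW1, monoW2, haW1, hdW2, hd1, hd2, hd3, hd4, hd5, AC1, AC2⟩ :=
    hwings
  obtain ⟨S0, hS0⟩ := hSsub
  haveI hne : Nonempty V := ⟨u⟩
  have hconn : G.Connected := by
    refine ⟨fun x y => ?_⟩
    obtain ⟨Qx, _, hx⟩ := hstraight x
    obtain ⟨Qy, _, hy⟩ := hstraight y
    exact ((Qx.takeUntil x hx).reachable).symm.trans ((Qy.takeUntil y hy).reachable)
  have hstep : ∀ {x y : V}, G.Adj x y → G.dist u y ≤ G.dist u x + 1 := by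
    intro x y hxy
    have h1 : G.dist x y ≤ 1 := by simpa using SimpleGraph.dist_le (Walk.cons hxy Walk.nil)
    have h2 := hconn.dist_triangle (u := u) (v := x) (w := y)
    omega
  have hu0 : G.dist u u = 0 := SimpleGraph.dist_self
  -- the monotone suffix T2 from dstar to v on a shortest uv-path
  obtain ⟨R, ⟨hRpath, hRlen⟩, hdstarR⟩ := hstraight dstar
  set T2 := R.dropUntil dstar hdstarR with hT2def
  have t1 : G.dist u v ≤ G.dist u dstar + G.dist dstar v := hconn.dist_triangle
  have t2 : G.dist u dstar ≤ (R.takeUntil dstar hdstarR).length := SimpleGraph.dist_le _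
  have t3 : G.dist dstar v ≤ T2.length := SimpleGraph.dist_le _
  have t4 : (R.takeUntil dstar hdstarR).length + T2.length = R.length := by
    rw [← Walk.length_append, Walk.take_spec]
  have hT2len : T2.length = G.dist dstar v := by omega
  have hsum : G.dist u v = G.dist u dstar + G.dist dstar v := by omega
  have hT2path : T2.IsPath := hRpath.dropUntil _
  have hrangeT2 : T2.support.map (fun z => G.dist u z)
      = List.range' (G.dist u dstar) (T2.length + 1) :=
    range_of_shortest hconn T2 hT2len hsum
  have monoT2 : MonoWalk G u T2 := by rw [MonoWalk, hrangeT2]; exact List.nodup_range'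
  have hT2mem : ∀ z ∈ T2.support, G.dist u dstar ≤ G.dist u z := by
    intro z hz
    have hmem : G.dist u z ∈ List.range' (G.dist u dstar) (T2.length + 1) := by
      rw [← hrangeT2]; exact List.mem_map_of_mem hz
    exact (List.mem_range'_1.mp hmem).1
  have hT2mem' : ∀ z ∈ T2.support, z ≠ dstar → G.dist u dstar + 1 ≤ G.dist u z := by
    intro z hz hzne
    have h1 := hT2mem z hz
    have h2 : G.dist u z ≠ G.dist u dstar := fun h =>
      hzne (mono_inj monoT2 hz T2.start_mem_support h)
    omega
  -- facts about S
  have hSmem : ∀ z ∈ S.support, G.dist u z ≤ G.dist u s := by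
    intro z hz
    have := mono_bound hSmono hstep hz
    omega
  have hSmem' : ∀ z ∈ S.support, z ≠ s → G.dist u z + 1 ≤ G.dist u s := by
    intro z hz hzne
    have h1 := hSmem z hz
    have h2 : G.dist u z ≠ G.dist u s := fun h => hzne (mono_inj hSmono hz S.end_mem_support h)
    omega
  have hSsplit : S.support = S0.support ++ W1.reverse.support.tail := by
    rw [hS0, Walk.support_append]
  have monoS0 : MonoWalk G u S0 := by
    have hm := hSmono
    rw [MonoWalk, hSsplit, List.map_append] at hm
    exact (List.nodup_append.mp hm).1
  have hS0mem : ∀ z ∈ S0.support, G.dist u z ≤ G.dist u astar := by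
    intro z hz
    have := mono_bound monoS0 hstep hz
    omega
  have hW1S : ∀ z ∈ W1.support, z ∈ S.support := by
    intro z hz; rw [hS0]
    refine (Walk.mem_support_append_iff _ _).mpr (Or.inr ?_)
    rw [Walk.support_reverse]; exact List.mem_reverse.mpr hz
  have hmemS : ∀ z ∈ S.support, z ∈ S0.support ∨ z ∈ W1.support := by
    intro z hz
    rw [hS0] at hz
    rcases (Walk.mem_support_append_iff _ _).mp hz with h | h
    · exact Or.inl h
    · right; rw [Walk.support_reverse] at h; exact List.mem_reverse.mp h
  -- facts about W2
  have hW2mem : ∀ z ∈ W2.support, G.dist u t ≤ G.dist u z ∧ G.dist u z ≤ G.dist u dstar := by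
    intro z hz
    have := mono_bound monoW2 hstep hz
    omega
  have hW2mem' : ∀ z ∈ W2.support, z ≠ t → G.dist u t + 1 ≤ G.dist u z := by
    intro z hz hzne
    have h1 := (hW2mem z hz).1
    have h2 : G.dist u z ≠ G.dist u t := fun h =>
      hzne (mono_inj monoW2 hz W2.start_mem_support h)
    omega
  -- the walk T
  set T : G.Walk t v := W2.append T2 with hTdef
  have hTsupp : T.support = W2.support ++ T2.support.tail := Walk.support_append _ _
  have hT2cons : T2.support = dstar :: T2.support.tail := T2.support_eq_cons
  have hmapT2tail : T2.support.tail.map (fun z => G.dist u z)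
      = List.range' (G.dist u dstar + 1) T2.length := by
    have h1 := hrangeT2
    rw [hT2cons, List.map_cons, List.range'_succ] at h1
    exact ((List.cons.injEq _ _ _ _).mp h1).2
  have monoT : MonoWalk G u T := by
    rw [MonoWalk, hTsupp, List.map_append, List.nodup_append']
    refine ⟨monoW2, by rw [hmapT2tail]; exact List.nodup_range', ?_⟩
    intro kval hk1 hk2
    obtain ⟨z, hz, hzk⟩ := List.mem_map.mp hk1
    replace hzk : G.dist u z = kval := hzk
    rw [hmapT2tail] at hk2
    have h1 := (hW2mem z hz).2
    have h2 := List.mem_range'_1.mp hk2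
    omega
  have hTpath : T.IsPath := Walk.IsPath.mk' (List.Nodup.of_map _ monoT)
  have hmemT : ∀ z ∈ T.support, z ∈ W2.support ∨ z ∈ T2.support :=
    fun z hz => (Walk.mem_support_append_iff _ _).mp hz
  -- gap helper
  have gap : ∀ {z y : V}, G.dist u z + 2 ≤ G.dist u y → z ≠ y ∧ ¬ G.Adj z y := by
    intro z y hgap
    constructor
    · rintro rfl; omega
    · intro hadj; have := hstep hadj; omega
  have hastar_ne_s : astar ≠ s := fun h => by rw [h] at hd1; omega
  -- anticompleteness A
  have antiA : Anticomplete G {x | x ∈ S.support ∧ x ≠ s} {x | x ∈ T.support} := by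
    rintro z ⟨hzS, hzs⟩ y hyT
    rcases hmemT y hyT with hyW2 | hyT2
    · rcases hmemS z hzS with hzS0 | hzW1
      · have hz1 : G.dist u z ≤ G.dist u astar := hS0mem z hzS0
        by_cases hyt : y = t
        · by_cases hza : z = astar
          · rw [hza, hyt]
            exact AC1 astar ⟨W1.end_mem_support, hastar_ne_s⟩ t W2.start_mem_support
          · have hne : G.dist u z ≠ G.dist u astar := fun h =>
              hza (mono_inj monoS0 hzS0 S0.end_mem_support h)
            rw [hyt]
            exact gap (by omega)
        · have h1 := hW2mem' y hyW2 hyt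
          exact gap (by omega)
      · exact AC1 z ⟨hzW1, hzs⟩ y hyW2
    · have h1 := hT2mem y hyT2
      have h2 := hSmem' z hzS hzs
      exact gap (by omega)
  -- anticompleteness B
  have antiB : Anticomplete G {x | x ∈ S.support} {x | x ∈ T.support ∧ x ≠ t} := by
    rintro z hzS y ⟨hyT, hyt⟩
    rcases hmemT y hyT with hyW2 | hyT2
    · rcases hmemS z hzS with hzS0 | hzW1
      · have h1 := hW2mem' y hyW2 hyt
        have h2 := hS0mem z hzS0
        exact gap (by omega)
      · exact AC2 z hzW1 y ⟨hyW2, hyt⟩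
    · have h1 := hT2mem y hyT2
      by_cases hzs : z = s
      · by_cases hyd : y = dstar
        · have hdt : dstar ≠ t := fun h => by rw [h] at hd5; omega
          rw [hzs, hyd]
          exact AC2 s W1.start_mem_support dstar ⟨W2.end_mem_support, hdt⟩
        · have h2 := hT2mem' y hyT2 hyd
          rw [hzs]
          exact gap (by omega)
      · have h2 := hSmem' z hzS hzs
        exact gap (by omega)
  -- assemble
  obtain ⟨hs₀, ht₀, hmonopre, _hmonosuf, _hmax1, _hmax2⟩ := htwist
  refine ⟨hSpath, hSmono, rfl, ⟨T, hTpath, monoT, antiA, antiB⟩, ?_⟩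
  intro hs' a' ha' hha'
  have ha'2 : a' ∈ (P.takeUntil s hs₀).support := ha'
  have ha2 : a ∈ (P.takeUntil s hs₀).support := ha
  have heq : a' = a := mono_inj hmonopre ha'2 ha2 (by rw [hha', hha])
  rw [heq]
  exact hW1S a haW1
end

section
/- Let G be a graph with distinguished vertex u and heights h(x) = d_G(u,x), and let a,b,x,y,c,d be vertices with h(a) = h(b) ≤ h(x) = h(y) ≤ h(c) = h(d). If (a,b,x,y) admits a pair of wings (U1,U2) in G with U1 anticomplete to U2, and (x,y,c,d) admits a pair of wings (V1,V2) in G with V1 anticomplete to V2, then (a,b,c,d) admits a pair of wings (W1,W2) in G with W1 anticomplete to W2. -/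
open SimpleGraph

variable {V : Type*}

section Statement14Aux

variable {V : Type*}

private lemma adj_dist_le (G : SimpleGraph V) (u : V) {w z : V} (hadj : G.Adj w z) :
    G.dist u z ≤ G.dist u w + 1 := by
  by_cases hr : G.Reachable u w
  · obtain ⟨p, hp⟩ := hr.exists_walk_length_eq_dist
    have h := SimpleGraph.dist_le (p.append hadj.toWalk)
    simp only [SimpleGraph.Walk.length_append, hp, SimpleGraph.Adj.toWalk,
      SimpleGraph.Walk.length_cons, SimpleGraph.Walk.length_nil] at h
    omega
  · have hz : ¬ G.Reachable u z := fun hz => hr (hz.trans hadj.symm.reachable)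
    rw [SimpleGraph.dist_eq_zero_of_not_reachable hr,
      SimpleGraph.dist_eq_zero_of_not_reachable hz]
    omega

private lemma step_chain : ∀ (l : List ℕ),
    l.Chain' (fun m n => n ≤ m + 1 ∧ m ≤ n + 1) → l.Nodup →
    l.Chain' (· < ·) ∨ l.Chain' (· > ·)
  | [], _, _ => Or.inl List.isChain_nil
  | [_], _, _ => Or.inl (List.isChain_singleton _)
  | a :: b :: t, hstep, hnd => by
    have hab : b ≤ a + 1 ∧ a ≤ b + 1 := (List.isChain_cons_cons.mp hstep).1
    have htail := (List.isChain_cons_cons.mp hstep).2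
    have hndt : (b :: t).Nodup := hnd.of_cons
    have hmem : a ∉ b :: t := (List.nodup_cons.mp hnd).1
    have hne : a ≠ b := fun h => hmem (h ▸ List.mem_cons_self (a := b) (l := t))
    rcases step_chain (b :: t) htail hndt with hc | hc
    · by_cases h' : a < b
      · exact Or.inl (List.isChain_cons_cons.mpr ⟨h', hc⟩)
      · have ha : a = b + 1 := by omega
        cases t with
        | nil => exact Or.inr (List.isChain_cons_cons.mpr ⟨by omega, List.isChain_singleton _⟩)
        | cons e t' =>
          have hbe : b < e := (List.isChain_cons_cons.mp hc).1
          have heb : e ≤ b + 1 := ((List.isChain_cons_cons.mp htail).1).1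
          have : a = e := by omega
          exact (hmem (show a ∈ b :: e :: t' by rw [this]; exact List.mem_cons_of_mem b (List.mem_cons_self (a := e) (l := t')))).elim
    · by_cases h' : b < a
      · exact Or.inr (List.isChain_cons_cons.mpr ⟨h', hc⟩)
      · have hb : b = a + 1 := by omega
        cases t with
        | nil => exact Or.inl (List.isChain_cons_cons.mpr ⟨by omega, List.isChain_singleton _⟩)
        | cons e t' =>
          have hbe : b > e := (List.isChain_cons_cons.mp hc).1
          have heb : b ≤ e + 1 := ((List.isChain_cons_cons.mp htail).1).2
          have : a = e := by omega
          exact (hmem (show a ∈ b :: e :: t' by rw [this]; exact List.mem_cons_of_mem b (List.mem_cons_self (a := e) (l := t')))).elim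

private lemma mono_chain (G : SimpleGraph V) (u : V) {p q : V} (W : G.Walk p q)
    (hm : MonoWalk G u W) :
    (W.support.map (fun z => G.dist u z)).Chain' (· < ·) ∨
      (W.support.map (fun z => G.dist u z)).Chain' (· > ·) := by
  apply step_chain
  · exact List.isChain_map_of_isChain _
      (fun s t hst => ⟨adj_dist_le G u hst, adj_dist_le G u hst.symm⟩)
      W.isChain_adj_support
  · exact hm

private lemma head_lt (G : SimpleGraph V) (u : V) {p q : V} (W : G.Walk p q)
    (hpw : (W.support.map (fun z => G.dist u z)).Pairwise (· > ·)) :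
    ∀ w ∈ W.support, w ≠ p → G.dist u w < G.dist u p := by
  intro w hw hne
  have hw' : w ∈ W.support.tail := by
    rw [W.support_eq_cons] at hw
    rcases List.mem_cons.mp hw with h | h
    · exact absurd h hne
    · exact h
  rw [W.support_eq_cons, List.map_cons] at hpw
  exact (List.pairwise_cons.mp hpw).1 _ (List.mem_map_of_mem hw')

private lemma head_gt (G : SimpleGraph V) (u : V) {p q : V} (W : G.Walk p q)
    (hpw : (W.support.map (fun z => G.dist u z)).Pairwise (· < ·)) :
    ∀ w ∈ W.support, w ≠ p → G.dist u p < G.dist u w := by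
  intro w hw hne
  have hw' : w ∈ W.support.tail := by
    rw [W.support_eq_cons] at hw
    rcases List.mem_cons.mp hw with h | h
    · exact absurd h hne
    · exact h
  rw [W.support_eq_cons, List.map_cons] at hpw
  exact (List.pairwise_cons.mp hpw).1 _ (List.mem_map_of_mem hw')

private lemma reverse_map_support (G : SimpleGraph V) (u : V) {p q : V} (W : G.Walk p q) :
    (W.reverse.support.map (fun z => G.dist u z)) =
      (W.support.map (fun z => G.dist u z)).reverse := by
  rw [SimpleGraph.Walk.support_reverse, List.map_reverse]

private lemma mono_reverse (G : SimpleGraph V) (u : V) {p q : V} (W : G.Walk p q)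
    (hm : MonoWalk G u W) : MonoWalk G u W.reverse := by
  unfold MonoWalk at *
  rw [reverse_map_support]
  exact List.nodup_reverse.mpr hm

/-- Bounds for a height-decreasing monotone walk. -/
private lemma mono_bounds (G : SimpleGraph V) (u : V) {p q : V} (W : G.Walk p q)
    (hm : MonoWalk G u W) (hpq : G.dist u q ≤ G.dist u p) :
    ∀ w ∈ W.support, (G.dist u q ≤ G.dist u w ∧ G.dist u w ≤ G.dist u p) ∧
      (w ≠ q → G.dist u q < G.dist u w) ∧ (w ≠ p → G.dist u w < G.dist u p) := by
  have hlast : ∀ (l : List ℕ), l.Pairwise (· > ·) →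
      ((W.support.map (fun z => G.dist u z)) = l) → True := fun _ _ _ => trivial
  rcases mono_chain G u W hm with hc | hc
  · -- increasing: forces W to be trivial
    have hpw := List.isChain_iff_pairwise.mp hc
    have hpwr : (W.reverse.support.map (fun z => G.dist u z)).Pairwise (· > ·) := by
      rw [reverse_map_support]
      exact List.pairwise_reverse.mpr hpw
    have hqp : q = p := by
      by_contra hne
      exact absurd hpq (not_le.mpr (head_gt G u W hpw q W.end_mem_support hne))
    intro w hw
    by_cases hwp : w = p
    · subst hwp
      exact ⟨⟨hpq, le_refl _⟩, fun h => absurd hqp.symm h, fun h => absurd rfl h⟩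
    · exfalso
      have h1 := head_gt G u W hpw w hw hwp
      have hwq : w ≠ q := hqp ▸ hwp
      have h2 := head_lt G u W.reverse hpwr w
        (by rw [SimpleGraph.Walk.support_reverse]; exact List.mem_reverse.mpr hw) hwq
      omega
  · have hpw := List.isChain_iff_pairwise.mp hc
    have hpwr : (W.reverse.support.map (fun z => G.dist u z)).Pairwise (· < ·) := by
      rw [reverse_map_support]
      exact List.pairwise_reverse.mpr hpw
    intro w hw
    have hwr : w ∈ W.reverse.support := by
      rw [SimpleGraph.Walk.support_reverse]; exact List.mem_reverse.mpr hw
    refine ⟨⟨?_, ?_⟩, fun h => head_gt G u W.reverse hpwr w hwr h,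
      fun h => head_lt G u W hpw w hw h⟩
    · by_cases hwq : w = q
      · subst hwq; exact le_refl _
      · exact le_of_lt (head_gt G u W.reverse hpwr w hwr hwq)
    · by_cases hwp : w = p
      · subst hwp; exact le_refl _
      · exact le_of_lt (head_lt G u W hpw w hw hwp)

/-- Bounds for a height-increasing monotone walk. -/
private lemma mono_bounds_incr (G : SimpleGraph V) (u : V) {p q : V} (W : G.Walk p q)
    (hm : MonoWalk G u W) (hpq : G.dist u p ≤ G.dist u q) :
    ∀ w ∈ W.support, (G.dist u p ≤ G.dist u w ∧ G.dist u w ≤ G.dist u q) ∧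
      (w ≠ p → G.dist u p < G.dist u w) ∧ (w ≠ q → G.dist u w < G.dist u q) := by
  intro w hw
  have hwr : w ∈ W.reverse.support := by
    rw [SimpleGraph.Walk.support_reverse]; exact List.mem_reverse.mpr hw
  obtain ⟨⟨hb1, hb2⟩, hs1, hs2⟩ := mono_bounds G u W.reverse (mono_reverse G u W hm) hpq w hwr
  exact ⟨⟨hb1, hb2⟩, hs1, hs2⟩

end Statement14Aux

/-- Let `a, b, x, y, c, d` be vertices of `G` with
`h(a) = h(b) ≤ h(x) = h(y) ≤ h(c) = h(d)`. If `(a, b, x, y)` admits a pair of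
wings in `G` whose two wings are anticomplete to each other, and `(x, y, c, d)`
does as well, then `(a, b, c, d)` admits a pair of wings in `G` whose two wings
are anticomplete to each other. -/
theorem statement14 [Fintype V] [DecidableEq V] (G : SimpleGraph V) (u : V)
    (a b x y c d : V)
    (h1 : G.dist u a = G.dist u b) (h2 : G.dist u b ≤ G.dist u x)
    (h3 : G.dist u x = G.dist u y) (h4 : G.dist u y ≤ G.dist u c)
    (h5 : G.dist u c = G.dist u d)
    (habxy : WingedAnti G u a b x y) (hxycd : WingedAnti G u x y c d) :
    WingedAnti G u a b c d := by
  obtain ⟨as1, ds1, U1, U2, hU, hUanti⟩ := habxy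
  obtain ⟨as2, ds2, V1, V2, hV, hVanti⟩ := hxycd
  obtain ⟨hU1p, hU2p, hU1m, hU2m, haU1, hyU2, hUe1, hUe2, hUe3, hUe4, hUe5, -, -⟩ := hU
  obtain ⟨hV1p, hV2p, hV1m, hV2m, hxV1, hdV2, hVe1, hVe2, hVe3, hVe4, hVe5, -, -⟩ := hV
  set T1 : G.Walk c x := V1.takeUntil x hxV1 with hT1def
  set T2 : G.Walk b y := U2.takeUntil y hyU2 with hT2def
  -- monotone prefixes
  have hT1sub : List.Sublist T1.support V1.support := by
    conv_rhs => rw [← V1.take_spec hxV1]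
    rw [SimpleGraph.Walk.support_append]
    exact List.sublist_append_left _ _
  have hT2sub : List.Sublist T2.support U2.support := by
    conv_rhs => rw [← U2.take_spec hyU2]
    rw [SimpleGraph.Walk.support_append]
    exact List.sublist_append_left _ _
  have hT1m : MonoWalk G u T1 := List.Nodup.sublist (hT1sub.map _) hV1m
  have hT2m : MonoWalk G u T2 := List.Nodup.sublist (hT2sub.map _) hU2m
  -- bounds
  have hBT1 := mono_bounds G u T1 hT1m (by omega)
  have hBU1 := mono_bounds G u U1 hU1m (by omega)
  have hBT2 := mono_bounds_incr G u T2 hT2m (by omega)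
  have hBV2 := mono_bounds_incr G u V2 hV2m (by omega)
  -- tail facts
  have hU1nd : U1.support.Nodup := List.Nodup.of_map _ hU1m
  have hV2nd : V2.support.Nodup := List.Nodup.of_map _ hV2m
  have hU1x : x ∉ U1.support.tail := by
    have h := hU1nd; rw [U1.support_eq_cons] at h; exact (List.nodup_cons.mp h).1
  have hV2y : y ∉ V2.support.tail := by
    have h := hV2nd; rw [V2.support_eq_cons] at h; exact (List.nodup_cons.mp h).1
  -- monotonicity of the combined walks
  have hW1m : MonoWalk G u (T1.append U1) := by
    unfold MonoWalk
    rw [SimpleGraph.Walk.support_append, List.map_append, List.nodup_append]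
    refine ⟨hT1m, List.Nodup.sublist ((List.tail_sublist _).map _) hU1m, ?_⟩
    intro m hm1 m' hm2 hmm'
    obtain ⟨w, hw, rfl⟩ := List.mem_map.mp hm1
    obtain ⟨z, hz, hzw⟩ := List.mem_map.mp hm2
    have hzx : z ≠ x := fun h => hU1x (h ▸ hz)
    have hb1 := (hBT1 w hw).1.1
    have hb2 := (hBU1 z (List.mem_of_mem_tail hz)).2.2 hzx
    omega
  have hW2m : MonoWalk G u (T2.append V2) := by
    unfold MonoWalk
    rw [SimpleGraph.Walk.support_append, List.map_append, List.nodup_append]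
    refine ⟨hT2m, List.Nodup.sublist ((List.tail_sublist _).map _) hV2m, ?_⟩
    intro m hm1 m' hm2 hmm'
    obtain ⟨w, hw, rfl⟩ := List.mem_map.mp hm1
    obtain ⟨z, hz, hzw⟩ := List.mem_map.mp hm2
    have hzy : z ≠ y := fun h => hV2y (h ▸ hz)
    have hb1 := (hBT2 w hw).1.2
    have hb2 := (hBV2 z (List.mem_of_mem_tail hz)).2.1 hzy
    omega
  have hW1path : (T1.append U1).IsPath := by
    rw [SimpleGraph.Walk.isPath_def]; exact List.Nodup.of_map _ hW1m
  have hW2path : (T2.append V2).IsPath := by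
    rw [SimpleGraph.Walk.isPath_def]; exact List.Nodup.of_map _ hW2m
  -- full anticompleteness
  have key : Anticomplete G {z | z ∈ (T1.append U1).support}
      {z | z ∈ (T2.append V2).support} := by
    intro w hw z hz
    simp only [Set.mem_setOf_eq, SimpleGraph.Walk.mem_support_append_iff] at hw hz
    rcases hw with hw | hw <;> rcases hz with hz | hz
    · by_cases hwx : w = x
      · subst hwx
        exact hUanti w U1.start_mem_support z (U2.support_takeUntil_subset hyU2 hz)
      · by_cases hzy : z = y
        · subst hzy
          exact hVanti w (V1.support_takeUntil_subset hxV1 hw) z V2.start_mem_support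
        · have hw1 := (hBT1 w hw).2.1 hwx
          have hz1 := (hBT2 z hz).2.2 hzy
          refine ⟨fun hEq => by subst hEq; omega, fun hadj => ?_⟩
          have h6 := adj_dist_le G u hadj.symm
          omega
    · exact hVanti w (V1.support_takeUntil_subset hxV1 hw) z hz
    · exact hUanti w hw z (U2.support_takeUntil_subset hyU2 hz)
    · by_cases hwx : w = x
      · subst hwx
        exact hVanti w hxV1 z hz
      · by_cases hzy : z = y
        · subst hzy
          exact hUanti w hw z hyU2
        · have hw1 := (hBU1 w hw).2.2 hwx
          have hz1 := (hBV2 z hz).2.1 hzy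
          refine ⟨fun hEq => by subst hEq; omega, fun hadj => ?_⟩
          have h6 := adj_dist_le G u hadj
          omega
  refine ⟨as1, ds2, T1.append U1, T2.append V2,
    ⟨hW1path, hW2path, hW1m, hW2m, ?_, ?_, hUe1, h1, by omega, h5, hVe5, ?_, ?_⟩, key⟩
  · exact (SimpleGraph.Walk.mem_support_append_iff _ _).mpr (Or.inr haU1)
  · exact (SimpleGraph.Walk.mem_support_append_iff _ _).mpr (Or.inr hdV2)
  · exact fun w hw z hz => key w hw.1 z hz
  · exact fun w hw z hz => key w hw z hz.1
end

section
/- Let P be a shortest uv-trail of a uv-straight graph G with twist pair (s,t), and let a be the vertex of P[u,s] with h(a) = h(t). Let S be a monotone uc-path of G containing a with h(c) ≥ h(s), and let T be a monotone tv-path of G such that S minus c is anticomplete to T and S is anticomplete to T minus t. Then the prefix S[u,x] of S, where x is the vertex of S with h(x) = h(s), is a sidetrack for P. -/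
open SimpleGraph

variable {V : Type*}

lemma list_range_aux : ∀ (L : List ℕ) (k : ℕ), (k :: L).Nodup →
    List.Chain' (fun a b => b ≤ a + 1) (k :: L) → (∀ m ∈ L, k ≤ m) →
    k :: L = List.range' k (L.length + 1) := by
  intro L
  induction L with
  | nil => intro k _ _ _; simp [List.range']
  | cons m L' ih =>
    intro k hnd hch hge
    have hm1 : m ≤ k + 1 := (List.isChain_cons_cons.mp hch).1
    have hm2 : k ≤ m := hge m (by simp)
    have hm3 : m ≠ k := by
      intro h; exact (List.nodup_cons.mp hnd).1 (by simp [h])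
    have hm : m = k + 1 := by omega
    have hrec := ih m (List.nodup_cons.mp hnd).2 (List.isChain_cons_cons.mp hch).2
      (fun z hz => by
        have h1 : k ≤ z := hge z (by simp [hz])
        have h2 : k ≠ z := fun h => (List.nodup_cons.mp hnd).1 (by simp [h ▸ hz])
        omega)
    rw [List.range'_succ]
    exact congrArg (k :: ·) (hm ▸ hrec)

lemma chain_dist_aux (G : SimpleGraph V) (u : V) :
    ∀ {p q : V} (W : G.Walk p q), G.Reachable u p →
    List.Chain' (fun a b => b ≤ a + 1) (W.support.map (fun z => G.dist u z)) := by
  intro p q W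
  induction W with
  | nil => intro _; exact List.isChain_singleton _
  | @cons p p' q hadj W ih =>
    intro hr
    have hstep : G.dist u p' ≤ G.dist u p + 1 := by
      obtain ⟨Q, hQ⟩ := hr.exists_walk_length_eq_dist
      have := SimpleGraph.dist_le (Q.concat hadj)
      simpa [SimpleGraph.Walk.length_concat, hQ] using this
    have hr' : G.Reachable u p' := hr.trans hadj.reachable
    have := ih hr'
    rw [SimpleGraph.Walk.support_cons, List.map_cons]
    simp only [List.Chain', List.isChain_cons]
    refine ⟨?_, this⟩
    intro b hb
    rw [W.support_eq_cons, List.map_cons] at hb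
    simp only [List.head?_cons, Option.mem_def, Option.some.injEq] at hb
    omega

/-- Heights along a monotone walk from `u` are `0, 1, 2, ...`. -/
lemma monoRange (G : SimpleGraph V) {u y : V} (W : G.Walk u y)
    (hW : MonoWalk G u W) :
    W.support.map (fun z => G.dist u z) = List.range (W.length + 1) := by
  have hsup := W.support_eq_cons
  have hch := chain_dist_aux G u W (SimpleGraph.Reachable.refl u)
  have hnd : (W.support.map (fun z => G.dist u z)).Nodup := hW
  rw [hsup, List.map_cons, SimpleGraph.dist_self] at hch hnd ⊢
  have hge : ∀ m ∈ W.support.tail.map (fun z => G.dist u z), 0 ≤ m :=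
    fun m _ => Nat.zero_le m
  have := list_range_aux _ 0 hnd hch hge
  rw [this, List.range_eq_range']
  congr 1
  have : W.support.length = W.length + 1 := SimpleGraph.Walk.length_support W
  rw [List.length_map]
  rw [W.support_eq_cons] at this
  simpa using this

/-- The height of the endpoint of a monotone walk from `u` is its length. -/
lemma monoLast (G : SimpleGraph V) {u y : V} (W : G.Walk u y)
    (hW : MonoWalk G u W) : G.dist u y = W.length := by
  have h1 := monoRange G W hW
  have h2 : (W.support.map (fun z => G.dist u z)).reverse
      = (List.range (W.length + 1)).reverse := by rw [h1]
  rw [← List.map_reverse, ← SimpleGraph.Walk.support_reverse,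
    List.range_succ, List.reverse_append] at h2
  rw [W.reverse.support_eq_cons, List.map_cons] at h2
  simpa using congrArg List.head? h2

/-- Let `P` be a shortest `uv`-trail of a `uv`-straight graph
`G` with twist pair `(s, t)`, and let `a` be the vertex of `P[u,s]` with
`h(a) = h(t)`. Let `S` be a monotone `uc`-path of `G` containing `a` with
`h(c) ≥ h(s)`, and let `T` be a monotone `tv`-path of `G` such that `S - c` is
anticomplete to `T` and `S` is anticomplete to `T - t`. Then the prefix
`S[u,x]` of `S`, where `x` is the vertex of `S` with `h(x) = h(s)`, is a
sidetrack for `P`. -/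
theorem statement16 [Fintype V] [DecidableEq V] (G : SimpleGraph V) (u v : V)
    (hstraight : Straight G u v)
    (P : G.Walk u v) (hP : IsShortestTrail G u v P)
    (s t : V) (htwist : IsTwistPair G u v P s t)
    (hs : s ∈ P.support)
    (a : V) (ha : a ∈ (P.takeUntil s hs).support)
    (hha : G.dist u a = G.dist u t)
    (c : V) (S : G.Walk u c) (hSpath : S.IsPath) (hSmono : MonoWalk G u S)
    (haS : a ∈ S.support) (hc : G.dist u s ≤ G.dist u c)
    (T : G.Walk t v) (hTpath : T.IsPath) (hTmono : MonoWalk G u T)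
    (hanti1 : Anticomplete G {z | z ∈ S.support ∧ z ≠ c} {z | z ∈ T.support})
    (hanti2 : Anticomplete G {z | z ∈ S.support} {z | z ∈ T.support ∧ z ≠ t})
    (x : V) (hx : x ∈ S.support) (hhx : G.dist u x = G.dist u s) :
    IsSidetrack G u v P s t (S.takeUntil x hx) := by
  classical
  set S' := S.takeUntil x hx with hS'def
  have hsupS : S.support = S'.support ++ (S.dropUntil x hx).support.tail := by
    rw [hS'def, ← SimpleGraph.Walk.support_append, SimpleGraph.Walk.take_spec]
  have hsub : ∀ z ∈ S'.support, z ∈ S.support := by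
    intro z hz; rw [hsupS]; exact List.mem_append_left _ hz
  have hS'path : S'.IsPath := hSpath.takeUntil hx
  have hS'mono : MonoWalk G u S' := by
    have : (S.support.map (fun z => G.dist u z)).Nodup := hSmono
    rw [hsupS, List.map_append] at this
    exact (List.nodup_append.mp this).1
  have hSnd : S.support.Nodup := hSpath.support_nodup
  -- a vertex of S' other than x is not c
  have hnotc : ∀ z ∈ S'.support, z ≠ x → z ≠ c := by
    intro z hz hzx hzc
    subst hzc
    by_cases hcx : z = x
    · exact hzx hcx
    · have hc1 : z ∈ (S.dropUntil x hx).support := SimpleGraph.Walk.end_mem_support _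
      have hc2 : z ∈ (S.dropUntil x hx).support.tail := by
        rw [(S.dropUntil x hx).support_eq_cons, List.mem_cons] at hc1
        rcases hc1 with h | h
        · exact absurd h hcx
        · exact h
      rw [hsupS] at hSnd
      exact (List.disjoint_of_nodup_append hSnd) hz hc2
  refine ⟨hS'path, hS'mono, hhx.trans rfl, ?_, ?_⟩
  · refine ⟨T, hTpath, hTmono, ?_, ?_⟩
    · intro z hz y hy
      obtain ⟨hz1, hz2⟩ := hz
      exact hanti1 z ⟨hsub z hz1, hnotc z hz1 hz2⟩ y hy
    · intro z hz y hy
      exact hanti2 z (hsub z hz) y hy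
  · intro hs' a' ha' hha'
    -- the two takeUntil walks coincide by proof irrelevance
    have heq : P.takeUntil s hs' = P.takeUntil s hs := rfl
    rw [heq] at ha'
    obtain ⟨hs0, ht0, hmonoPre, _, _, _⟩ := htwist
    have heq0 : P.takeUntil s hs0 = P.takeUntil s hs := rfl
    rw [heq0] at hmonoPre
    -- a' = a since heights are equal on a monotone walk
    have haa : a' = a := by
      have hnd : ((P.takeUntil s hs).support.map (fun z => G.dist u z)).Nodup :=
        hmonoPre
      exact List.inj_on_of_nodup_map hnd ha' ha (by rw [hha', hha])
    subst haa
    -- h a' ≤ h s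
    have hQ := monoRange G (P.takeUntil s hs) hmonoPre
    have hQs : G.dist u s = (P.takeUntil s hs).length :=
      monoLast G (P.takeUntil s hs) hmonoPre
    have hale : G.dist u a' ≤ G.dist u s := by
      have : G.dist u a' ∈ (P.takeUntil s hs).support.map (fun z => G.dist u z) :=
        List.mem_map_of_mem ha'
      rw [hQ, List.mem_range] at this
      omega
    -- a' ∈ S'.support
    have hS'range := monoRange G S' hS'mono
    have hS'x : G.dist u x = S'.length := monoLast G S' hS'mono
    have haS' : G.dist u a' ∈ S'.support.map (fun z => G.dist u z) := by
      rw [hS'range, List.mem_range]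
      omega
    have hamem : a' ∈ S.support := by
      have : a' ∈ (P.takeUntil s hs').support := ha'
      -- already have haS from hypothesis after subst
      exact haS
    rw [hsupS] at hamem
    rcases List.mem_append.mp hamem with h | h
    · exact h
    · exfalso
      have hMnd : (S.support.map (fun z => G.dist u z)).Nodup := hSmono
      rw [hsupS, List.map_append] at hMnd
      have hdisj := List.disjoint_of_nodup_append hMnd
      exact hdisj haS' (List.mem_map_of_mem h)
end
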